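/- Let G be a group and a, b ∈ G. Then for all natural numbers m, (a·b)^m ≡ a^m · b^m · [b,a]^{m(m-1)/2} modulo G^(3), where G^(3) is the third term of the lower central series. -/

import Mathlib

/-- The commutator `[a,b] = a⁻¹ b⁻¹ a b`. -/
def commP {G : Type*} [Group G] (a b : G) : G := a⁻¹ * b⁻¹ * a * b

private lemma aux_swap {Q : Type*} [Group Q] (A B c : Q)
    (hcB : ∀ t : ℕ, c ^ t * B = B * c ^ t)
    (hBA : B * A = A * B * c) :
    ∀ n : ℕ, B ^ n * A = A * B ^ n * c ^ n := by
  intro n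
  induction n with
  | zero => simp
  | succ k ih =>
    calc B ^ (k + 1) * A = B ^ k * (B * A) := by rw [pow_succ, mul_assoc]
      _ = B ^ k * A * (B * c) := by rw [hBA]; simp only [mul_assoc]
      _ = A * B ^ k * c ^ k * (B * c) := by rw [ih]
      _ = A * B ^ k * (c ^ k * B) * c := by simp only [mul_assoc]
      _ = A * B ^ k * (B * c ^ k) * c := by rw [hcB]
      _ = A * B ^ (k + 1) * c ^ (k + 1) := by
          rw [pow_succ, pow_succ]; simp only [mul_assoc]

private lemma aux_pow {Q : Type*} [Group Q] (A B c : Q)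
    (hcA : ∀ t : ℕ, c ^ t * A = A * c ^ t)
    (hcB : ∀ t : ℕ, c ^ t * B = B * c ^ t)
    (hBA : B * A = A * B * c) :
    ∀ n : ℕ, (A * B) ^ n = A ^ n * B ^ n * c ^ (n * (n - 1) / 2) := by
  intro n
  induction n with
  | zero => simp
  | succ k ih =>
    set t := k * (k - 1) / 2 with ht
    have harith : (k + 1) * (k + 1 - 1) / 2 = t + k := by
      rcases k with _ | j
      · simp [ht]
      · rw [ht]
        simp only [Nat.add_sub_cancel, Nat.succ_sub_one]
        have h1 : (j + 2) * (j + 1) = (j + 1) * j + 2 * (j + 1) := by ring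
        rw [h1, Nat.add_mul_div_left _ _ (by norm_num : 0 < 2)]
    have h1 : c ^ t * (A * B) = A * (B * c ^ t) := by
      rw [← mul_assoc, hcA, mul_assoc, hcB]
    have h2 : c ^ k * (B * c ^ t) = B * (c ^ t * c ^ k) := by
      rw [← mul_assoc, hcB, mul_assoc, ((Commute.refl c).pow_pow k t).eq]
    calc (A * B) ^ (k + 1) = (A * B) ^ k * (A * B) := pow_succ _ _
      _ = A ^ k * B ^ k * c ^ t * (A * B) := by rw [ih]
      _ = A ^ k * (B ^ k * A * (B * c ^ t)) := by
          simp only [mul_assoc]; rw [h1]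
      _ = A ^ k * (A * B ^ k * c ^ k * (B * c ^ t)) := by
          rw [aux_swap A B c hcB hBA]
      _ = A ^ (k + 1) * B ^ (k + 1) * c ^ ((k + 1) * (k + 1 - 1) / 2) := by
          rw [harith]
          simp only [pow_succ, pow_add, mul_assoc]; rw [h2]

open scoped commutatorElement

theorem mul_pow_mod_lcs3 {G : Type*} [Group G] (a b : G) (m : ℕ) :
    (a * b) ^ m * (a ^ m * b ^ m * (commP b a) ^ (m * (m - 1) / 2))⁻¹
      ∈ (⊤ : Subgroup G).lowerCentralSeries 2 := by
  set H := (⊤ : Subgroup G).lowerCentralSeries 2 with hH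
  let π : G →* G ⧸ H := QuotientGroup.mk' H
  have hcomm : commP b a ∈ (⊤ : Subgroup G).lowerCentralSeries 1 := by
    have h1 : commP b a = ⁅b⁻¹, a⁻¹⁆ := by
      simp [commP, commutatorElement_def]
    rw [h1, Subgroup.top_lowerCentralSeries_one]
    exact Subgroup.commutator_mem_commutator (Subgroup.mem_top _) (Subgroup.mem_top _)
  have hc : ∀ z : G, Commute (π (commP b a)) (π z) := by
    intro z
    have hmem : ⁅commP b a, z⁆ ∈ H := by
      rw [hH, show (2 : ℕ) = 1 + 1 from rfl, Subgroup.lowerCentralSeries_succ]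
      exact Subgroup.commutator_mem_commutator hcomm (Subgroup.mem_top _)
    have h1 : π ⁅commP b a, z⁆ = 1 := (QuotientGroup.eq_one_iff _).2 hmem
    rw [map_commutatorElement] at h1
    exact commutatorElement_eq_one_iff_commute.1 h1
  have hBA : π b * π a = π a * π b * π (commP b a) := by
    have h1 : b * a = a * b * commP b a := by simp [commP]; group
    calc π b * π a = π (b * a) := by simp
      _ = π (a * b * commP b a) := by rw [h1]
      _ = π a * π b * π (commP b a) := by simp
  have key : π ((a * b) ^ m)
      = π a ^ m * π b ^ m * π (commP b a) ^ (m * (m - 1) / 2) := by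
    have := aux_pow (π a) (π b) (π (commP b a))
      (fun t => ((hc a).pow_left t).eq) (fun t => ((hc b).pow_left t).eq) hBA m
    simpa using this
  have hgoal : π ((a * b) ^ m * (a ^ m * b ^ m * (commP b a) ^ (m * (m - 1) / 2))⁻¹) = 1 := by
    rw [map_mul, map_inv, key]
    simp only [map_mul, map_pow]
    group
  exact (QuotientGroup.eq_one_iff _).1 hgoal
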